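/- Let p ≥ 5 be a prime and let a, l and k be integers with 2 ≤ a ≤ p-1, 1 ≤ l ≤ a, k even, and (l-1)(p-1)+2 ≤ k ≤ l(p-1)-2. Then s(ap, ap - k) ≡ a·C(a-1, l-1)·s(p,1)^{l-1}·s(p, p - ⟨k⟩) (mod p^2), where ⟨k⟩ = k - (l-1)(p-1) is the unique integer with 0 ≤ ⟨k⟩ ≤ p-2 and k ≡ ⟨k⟩ (mod p-1), and C(a-1, l-1) denotes the binomial coefficient a-1 choose l-1. -/

import Mathlib

open Polynomial Finset


lemma unique_div_aux (d u t s r : ℕ) (hs : s < d) (hr : r < d)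
    (h : u*d + s = (u+t)*d + r) : t = 0 ∧ s = r := by
  have h1 : (u+t)*d = u*d + t*d := by ring
  rw [h1] at h
  rcases Nat.eq_zero_or_pos t with rfl | ht
  · omega
  · have := Nat.le_mul_of_pos_left d ht
    omega

lemma unique_div (d u v s r : ℕ) (hs : s < d) (hr : r < d) (h : u*d + s = v*d + r) :
    u = v ∧ s = r := by
  rcases le_total u v with h' | h'
  · obtain ⟨t, rfl⟩ := Nat.exists_eq_add_of_le h'
    obtain ⟨rfl, h2⟩ := unique_div_aux d u t s r hs hr h
    simp [h2]
  · obtain ⟨t, rfl⟩ := Nat.exists_eq_add_of_le h'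
    obtain ⟨rfl, h2⟩ := unique_div_aux d v t r s hr hs h.symm
    simp [h2]

lemma pow_add_sq_zero {R : Type*} [CommRing R] (g m : R) (hm : m * m = 0) (n : ℕ) :
    (g + m)^n = g^n + n • (m * g^(n-1)) := by
  induction n with
  | zero => simp
  | succ n ih =>
    rcases Nat.eq_zero_or_pos n with rfl | hn
    · simp [mul_comm]
    · rw [pow_succ, ih, add_mul, mul_add, mul_add]
      have h1 : g ^ (n-1) * g = g ^ n := by
        rw [← pow_succ]; congr 1; omega
      have h2 : n • (m * g ^ (n - 1)) * m = 0 := by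
        rw [smul_mul_assoc, mul_right_comm, hm, zero_mul, smul_zero]
      rw [h2, add_zero, smul_mul_assoc, mul_assoc, h1]
      simp only [Nat.add_sub_cancel, pow_succ, succ_nsmul]
      ring_nf

-- product of (u + ε j) when all pairwise products of ε vanish
lemma prod_add_sq_zero {R : Type*} [CommRing R] (u : R) (ε : ℕ → R)
    (h : ∀ i j, ε i * ε j = 0) (n : ℕ) :
    ∏ j ∈ Finset.range n, (u + ε j) = u^n + (∑ j ∈ Finset.range n, ε j) * u^(n-1) := by
  induction n with
  | zero => simp
  | succ n ih =>
    rcases Nat.eq_zero_or_pos n with rfl | hn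
    · simp [add_comm]
    · rw [Finset.prod_range_succ, ih, Finset.sum_range_succ, add_mul, mul_add, mul_add]
      have h1 : u ^ (n-1) * u = u ^ n := by rw [← pow_succ]; congr 1; omega
      have h2 : (∑ j ∈ Finset.range n, ε j) * u ^ (n-1) * ε n = 0 := by
        rw [mul_right_comm, Finset.sum_mul]
        have : ∀ j ∈ Finset.range n, ε j * ε n = 0 := fun j _ => h j n
        rw [Finset.sum_congr rfl this, Finset.sum_const, smul_zero, zero_mul]
      rw [h2, add_zero, mul_assoc, h1]
      simp only [Nat.add_sub_cancel, pow_succ, add_mul]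
      ring

lemma ascPochhammer_eq_prod_range (S : Type*) [CommSemiring S] (n : ℕ) :
    ascPochhammer S n = ∏ i ∈ Finset.range n, (X + C (i : S)) := by
  induction n with
  | zero => simp
  | succ n ih => rw [ascPochhammer_succ_right, ih, Finset.prod_range_succ, C_eq_natCast]

lemma ascPochhammer_zmod (p : ℕ) [Fact p.Prime] :
    ascPochhammer (ZMod p) p = X ^ p - X := by
  have hcard : Fintype.card (ZMod p) = p := ZMod.card p
  have h1 : ascPochhammer (ZMod p) p = ∏ c : ZMod p, (X + C c) := by
    rw [ascPochhammer_eq_prod_range]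
    refine Finset.prod_nbij' (fun i => (i : ZMod p)) (fun c => c.val)
      (fun i _ => Finset.mem_univ _)
      (fun c _ => Finset.mem_range.mpr (by simpa [hcard] using ZMod.val_lt c))
      (fun i hi => ZMod.val_natCast_of_lt (Finset.mem_range.mp hi))
      (fun c _ => ZMod.natCast_rightInverse c)
      (fun i _ => rfl)
  have h2 : ∏ c : ZMod p, (X + C c) = ∏ c : ZMod p, (X - C c) := by
    apply Fintype.prod_equiv (Equiv.neg (ZMod p))
    intro c
    simp [sub_neg_eq_add]
  have h3 : ∏ c : ZMod p, (X - C c) = X ^ p - X := by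
    have := FiniteField.roots_X_pow_card_sub_X (ZMod p)
    rw [hcard] at this
    have h4 := Polynomial.prod_multiset_X_sub_C_of_monic_of_roots_card_eq
      (p := (X ^ p - X : (ZMod p)[X])) ?_ ?_
    · rw [this] at h4
      rw [← h4, Finset.prod_eq_multiset_prod]
    · have hplt : 1 < p := (Fact.out : p.Prime).one_lt
      apply (Polynomial.monic_X_pow p).sub_of_left
      rw [Polynomial.degree_X_pow, Polynomial.degree_X]
      exact_mod_cast hplt
    · rw [this]
      have := FiniteField.X_pow_card_sub_X_natDegree_eq (ZMod p) (Fact.out : p.Prime).one_lt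
      simp [this, hcard]
  rw [h1, h2, h3]

lemma stirling_dvd' (p : ℕ) (hp : p.Prime) (i : ℕ) (h1 : i ≠ 1) (hip : i ≠ p) :
    p ∣ (ascPochhammer ℕ p).coeff i := by
  haveI : Fact p.Prime := ⟨hp⟩
  rw [← ZMod.natCast_eq_zero_iff]
  have : ((ascPochhammer ℕ p).coeff i : ZMod p)
      = ((ascPochhammer ℕ p).map (Nat.castRingHom (ZMod p))).coeff i := by
    rw [Polynomial.coeff_map]; rfl
  rw [this, ascPochhammer_map, ascPochhammer_zmod p, Polynomial.coeff_sub,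
    Polynomial.coeff_X_pow, Polynomial.coeff_X]
  simp [hip, Ne.symm h1]

lemma pow_add_sq_zero' {R : Type*} [CommRing R] (g m : R) (hm : m * m = 0) (n : ℕ) :
    (g + m)^n = g^n + n • (m * g^(n-1)) := by
  induction n with
  | zero => simp
  | succ n ih =>
    rcases Nat.eq_zero_or_pos n with rfl | hn
    · simp [mul_comm]
    · rw [pow_succ, ih, add_mul, mul_add, mul_add]
      have h1 : g ^ (n-1) * g = g ^ n := by
        rw [← pow_succ]; congr 1; omega
      have h2 : n • (m * g ^ (n - 1)) * m = 0 := by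
        rw [smul_mul_assoc, mul_right_comm, hm, zero_mul, smul_zero]
      rw [h2, add_zero, smul_mul_assoc, mul_assoc, h1]
      simp only [Nat.add_sub_cancel, pow_succ, succ_nsmul]
      ring_nf

lemma comp_X_add_C_sq_zero {R : Type*} [CommRing R] (c : R) (hc : c * c = 0) (q : R[X]) :
    q.comp (X + C c) = q + C c * derivative q := by
  have hcc : (C c : R[X]) * C c = 0 := by rw [← C_mul, hc, C_0]
  induction q using Polynomial.induction_on' with
  | add u v hu hv =>
    rw [add_comp, hu, hv, derivative_add, mul_add]; ring
  | monomial n t =>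
    rw [monomial_comp, derivative_monomial, pow_add_sq_zero' X (C c) hcc n,
      ← C_mul_X_pow_eq_monomial, ← C_mul_X_pow_eq_monomial]
    rw [mul_add, nsmul_eq_mul, C_mul, C_eq_natCast]
    push_cast
    ring

lemma asc_nat_prod (a p : ℕ) :
    ascPochhammer ℕ (a * p) = ∏ j ∈ Finset.range a, (ascPochhammer ℕ p).comp (X + C (j*p : ℕ)) := by
  induction a with
  | zero => simp
  | succ a ih =>
    have : (a+1) * p = a*p + p := by ring
    rw [this, ← ascPochhammer_mul, ih, Finset.prod_range_succ, ← C_eq_natCast]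
    simp [Nat.cast_id]

lemma g_pow_expand {R : Type*} [CommRing R] (e : R) (p n : ℕ) :
    (X^p + C e * X)^n
      = ∑ j ∈ Finset.range (n+1), C ((n.choose j : R) * e^(n-j)) * X^(j*p + (n-j)) := by
  rw [add_pow]
  apply Finset.sum_congr rfl
  intro j hj
  rw [← pow_mul, mul_pow, ← C_pow, C_mul, C_eq_natCast, pow_add, pow_mul]
  ring

lemma coeff_g_pow_zero {R : Type*} [CommRing R] (e : R) (p n N : ℕ)
    (h : ∀ j, j ≤ n → j*p + (n-j) ≠ N) :
    ((X^p + C e * X)^n).coeff N = 0 := by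
  rw [g_pow_expand, finset_sum_coeff]
  apply Finset.sum_eq_zero
  intro j hj
  have hj' := Finset.mem_range.mp hj
  rw [coeff_C_mul, coeff_X_pow, if_neg, mul_zero]
  exact fun hN => h j (by omega) hN.symm

section Arith
variable {p a l k r : ℕ} (hp5 : 5 ≤ p) (hl1 : 1 ≤ l) (hl2 : l ≤ a)
  (hr1 : 2 ≤ r) (hr2 : r ≤ p - 3) (hkL : k = (l-1)*(p-1) + r) (hkap : k ≤ a*p)

include hp5 hr1 hr2 in
lemma core_unique {u s : ℕ} (hs : s < p - 1) (h : u*(p-1) + s = (l-1)*(p-1) + r) :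
    u = l - 1 ∧ s = r :=
  unique_div (p-1) u (l-1) s r hs (by omega) h

-- helper: u*(p-1) + u = u*p
lemma mul_pred (u p : ℕ) (hp : 1 ≤ p) : u*(p-1) + u = u*p := by
  have h3 : p - 1 + 1 = p := by omega
  calc u*(p-1) + u = u*((p-1)+1) := by ring
    _ = u*p := by rw [h3]

include hp5 hl1 hl2 hr1 hr2 hkL hkap in
lemma lemA {j : ℕ} (hj : j ≤ a) (heq : j*p + (a-j) = a*p - k) : False := by
  set u := a - j with hu'
  have hu : j + u = a := by omega
  have e1 : (j+u)*p = j*p + u*p := by ring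
  have e1' : a * p = (j+u)*p := by rw [hu]
  have e2 : u*(p-1) + u = u*p := mul_pred u p (by omega)
  have h : u*(p-1) + 0 = (l-1)*(p-1) + r := by omega
  have := (core_unique hp5 hr1 hr2 (by omega) h).2
  omega

include hp5 hl1 hl2 hr1 hr2 hkL hkap in
lemma lemB {j : ℕ} (hj : j < a) (heq : j*p + (a-1-j) = a*p - k) : False := by
  set u := a - 1 - j with hu'
  have hu : j + u = a - 1 := by omega
  have e1 : (j+u+1)*p = j*p + u*p + p := by ring
  have e1' : a * p = (j+u+1)*p := by rw [show j+u+1 = a from by omega]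
  have e2 : u*(p-1) + u = u*p := mul_pred u p (by omega)
  have e3 : (u+1)*(p-1) = u*(p-1) + (p-1) := by ring
  have h : (u+1)*(p-1) + 1 = (l-1)*(p-1) + r := by omega
  have := (core_unique hp5 hr1 hr2 (by omega) h).2
  omega

include hp5 hl1 hl2 hr1 hr2 hkL hkap in
lemma lemC {i j : ℕ} (hi2 : 2 ≤ i) (hip : i < p) (hj : j < a) :
    i + (j*p + (a-1-j)) = a*p - k ↔ (i = p - r ∧ j = a - l) := by
  constructor
  · intro heq
    set u := a - 1 - j with hu'
    have hu : j + u = a - 1 := by omega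
    have e1 : (j+u+1)*p = j*p + u*p + p := by ring
    have e1' : a * p = (j+u+1)*p := by rw [show j+u+1 = a from by omega]
    have e2 : u*(p-1) + u = u*p := mul_pred u p (by omega)
    have h : u*(p-1) + (p - i) = (l-1)*(p-1) + r := by omega
    have hc := core_unique hp5 hr1 hr2 (show p - i < p - 1 by omega) h
    omega
  · rintro ⟨rfl, rfl⟩
    have hll : (a-l)*p + l*p = a*p := by
      rw [← add_mul, show a-l+l = a from by omega]
    have hlp : l*(p-1) + l = l*p := mul_pred l p (by omega)
    have hLl : (l-1)*(p-1) + (p-1) = l*(p-1) := by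
      rw [← add_one_mul, show l-1+1 = l from by omega]
    omega

end Arith


/-- The (unsigned) Stirling number of the first kind `s(n,k)`, defined by
`x(x+1)(x+2)⋯(x+n-1) = Σ_{k=0}^{n} s(n,k) x^k`. -/
noncomputable def stirlingFirst (n k : ℕ) : ℕ := (ascPochhammer ℕ n).coeff k

theorem stmt19 (p a l k : ℕ) (hp : p.Prime) (hp5 : 5 ≤ p)
    (ha2 : 2 ≤ a) (ha : a ≤ p - 1) (hl1 : 1 ≤ l) (hl2 : l ≤ a)
    (hkeven : Even k) (hk1 : (l - 1) * (p - 1) + 2 ≤ k) (hk2 : k ≤ l * (p - 1) - 2) :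
    stirlingFirst (a * p) (a * p - k) ≡
      a * Nat.choose (a - 1) (l - 1) * (stirlingFirst p 1) ^ (l - 1) *
        stirlingFirst p (p - (k - (l - 1) * (p - 1))) [MOD p ^ 2] := by
  haveI : Fact p.Prime := ⟨hp⟩
  set r := k - (l - 1) * (p - 1) with hrdef
  have hLl : (l-1)*(p-1) + (p-1) = l*(p-1) := by
    rw [← add_one_mul, show l-1+1 = l from by omega]
  have hr1 : 2 ≤ r := by omega
  have hr2 : r ≤ p - 3 := by omega
  have hkL : k = (l-1)*(p-1) + r := by omega
  have hkap : k ≤ a*p := by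
    have h1 : l*(p-1) ≤ a*(p-1) := Nat.mul_le_mul_right _ hl2
    have h2 : a*(p-1) ≤ a*p := Nat.mul_le_mul_left _ (by omega)
    omega
  set N := a*p - k with hN
  -- move to ZMod (p^2)
  rw [stirlingFirst, stirlingFirst, stirlingFirst,
    ← ZMod.natCast_eq_natCast_iff]
  set R := ZMod (p^2) with hR
  set φ := Nat.castRingHom R with hφ
  have hφapp : ∀ x : ℕ, φ x = (x : R) := fun x => rfl
  have hpp : (p : R) * (p : R) = 0 := by
    rw [← Nat.cast_mul, ← pow_two]
    exact ZMod.natCast_self (p^2)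
  -- divisible-coefficients machinery
  have hPmul : ∀ q q' : R[X], (∀ i, (p:R) ∣ q.coeff i) → (∀ i, (p:R) ∣ q'.coeff i) →
      q * q' = 0 := by
    intro q q' hq hq'
    ext n
    rw [coeff_mul, coeff_zero]
    apply Finset.sum_eq_zero
    rintro ⟨x, y⟩ _
    obtain ⟨u, hu⟩ := hq x
    obtain ⟨v, hv⟩ := hq' y
    show q.coeff x * q'.coeff y = 0
    rw [hu, hv, mul_mul_mul_comm, hpp, zero_mul]
  have hCzero : ∀ (c : R) (q : R[X]), (p:R) ∣ c → (∀ i, (p:R) ∣ q.coeff i) →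
      C c * q = 0 := by
    intro c q hc hq
    ext n
    rw [coeff_C_mul, coeff_zero]
    obtain ⟨u, hu⟩ := hc
    obtain ⟨v, hv⟩ := hq n
    rw [hu, hv, mul_mul_mul_comm, hpp, zero_mul]
  -- structure of f
  set f : R[X] := (ascPochhammer ℕ p).map φ with hfdef
  set e : R := φ ((ascPochhammer ℕ p).coeff 1) with hedef
  set m : R[X] := ∑ i ∈ Finset.Ico 2 p, C (φ ((ascPochhammer ℕ p).coeff i)) * X^i with hmdef
  set g : R[X] := X^p + C e * X with hgdef
  have hmcoeff : ∀ n, m.coeff n =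
      if n ∈ Finset.Ico 2 p then φ ((ascPochhammer ℕ p).coeff n) else 0 := by
    intro n
    rw [hmdef, finset_sum_coeff]
    simp only [coeff_C_mul, coeff_X_pow, mul_ite, mul_one, mul_zero]
    rw [Finset.sum_ite_eq (Finset.Ico 2 p) n (fun i => φ ((ascPochhammer ℕ p).coeff i))]
  have hsdvd : ∀ i, i ≠ 1 → i ≠ p → (p:R) ∣ φ ((ascPochhammer ℕ p).coeff i) := by
    intro i h1 h2
    rw [hφapp]
    exact_mod_cast Nat.cast_dvd_cast (α := R) (stirling_dvd' p hp i h1 h2)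
  have hPm : ∀ i, (p:R) ∣ m.coeff i := by
    intro i
    rw [hmcoeff]
    split
    · next h => exact hsdvd i (by simp at h; omega) (by simp at h; omega)
    · exact dvd_zero _
  have hPm' : ∀ i, (p:R) ∣ (derivative m).coeff i := by
    intro i
    rw [coeff_derivative]
    exact (hPm (i+1)).mul_right _
  have hm2 : m * m = 0 := hPmul m m hPm hPm
  -- coefficient facts for ascPochhammer ℕ p
  have hnd : (ascPochhammer ℕ p).natDegree = p := ascPochhammer_natDegree ℕ p
  have hsp : (ascPochhammer ℕ p).coeff p = 1 := by
    have := (monic_ascPochhammer ℕ p).coeff_natDegree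
    rwa [hnd] at this
  have hs0 : (ascPochhammer ℕ p).coeff 0 = 0 := by
    rw [coeff_zero_eq_eval_zero, ascPochhammer_eval_zero, if_neg (by omega)]
  have hstop : ∀ n, p < n → (ascPochhammer ℕ p).coeff n = 0 := by
    intro n hn
    exact coeff_eq_zero_of_natDegree_lt (by rw [hnd]; exact hn)
  have hf : f = g + m := by
    ext n
    rw [hfdef, coeff_map, hgdef, coeff_add, coeff_add, coeff_X_pow, coeff_C_mul, coeff_X,
      hmcoeff]
    by_cases hnp : n = p
    · have h1 : ¬ n ∈ Finset.Ico 2 p := by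
        simp only [Finset.mem_Ico, not_and, not_lt]; omega
      have h2 : ¬ ((1:ℕ) = n) := by omega
      rw [if_pos hnp, if_neg h2, if_neg h1, hnp, hsp]
      simp
    · by_cases hn1 : n = 1
      · have h1 : ¬ n ∈ Finset.Ico 2 p := by
          simp only [Finset.mem_Ico, not_and, not_lt]; omega
        rw [if_neg hnp, if_pos (by omega : (1:ℕ) = n), if_neg h1, hn1]
        simp
        rw [hedef]
        rfl
      · by_cases hmem : n ∈ Finset.Ico 2 p
        · have h3 : ¬((1:ℕ) = n) := by simp at hmem; omega
          rw [if_neg hnp, if_neg h3, if_pos hmem]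
          simp
        · have hcz : (ascPochhammer ℕ p).coeff n = 0 := by
            simp only [Finset.mem_Ico, not_and_or, not_le, not_lt] at hmem
            rcases hmem with h | h
            · interval_cases n
              · exact hs0
              · omega
            · exact hstop n (by omega)
          rw [if_neg hnp, if_neg (by omega : ¬((1:ℕ) = n)), if_neg hmem, hcz]
          simp
  -- decomposition of (ascPochhammer ℕ (a*p)).map φ
  have hcsq : ∀ i j : ℕ, ((i*p : ℕ) : R) * ((j*p : ℕ) : R) = 0 := by
    intro i j
    push_cast
    rw [show ((i*p : ℕ) : R) = (i:R)*(p:R) from Nat.cast_mul (α := ZMod (p^2)) i p,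
      show ((j*p : ℕ) : R) = (j:R)*(p:R) from Nat.cast_mul (α := ZMod (p^2)) j p]
    calc (i:R)*(p:R)*((j:R)*(p:R)) = ((p:R)*(p:R))*((i:R)*(j:R)) := by ring
    _ = 0 := by rw [hpp, zero_mul]
  have hmap : (ascPochhammer ℕ (a*p)).map φ
      = ∏ j ∈ Finset.range a, (f + C ((j*p : ℕ) : R) * derivative f) := by
    rw [asc_nat_prod a p, Polynomial.map_prod]
    apply Finset.prod_congr rfl
    intro j _
    rw [Polynomial.map_comp, Polynomial.map_add, map_X, map_C]
    exact comp_X_add_C_sq_zero _ (hcsq j j) f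
  have hprod : ∏ j ∈ Finset.range a, (f + C ((j*p : ℕ) : R) * derivative f)
      = f^a + (∑ j ∈ Finset.range a, C ((j*p : ℕ) : R) * derivative f) * f^(a-1) := by
    apply prod_add_sq_zero
    intro i j
    rw [mul_mul_mul_comm, ← C_mul, hcsq i j, C_0, zero_mul]
  set t : R := ((∑ j ∈ Finset.range a, j : ℕ) : R) with htdef
  set cc : R := (p : R) * t with hccdef
  have hccd : (p:R) ∣ cc := ⟨t, rfl⟩
  have hsum : (∑ j ∈ Finset.range a, C ((j*p : ℕ) : R) * derivative f)
      = C cc * derivative f := by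
    rw [← Finset.sum_mul]
    congr 1
    rw [← map_sum C _ (Finset.range a)]
    congr 1
    rw [hccdef, htdef]
    push_cast
    rw [show ((∑ j ∈ Finset.range a, j : ℕ) : R) = ∑ j ∈ Finset.range a, (j:R) from
      Nat.cast_sum (R := ZMod (p^2)) _ _, Finset.mul_sum]
    exact Finset.sum_congr rfl (fun x _ => by
      rw [show ((x*p : ℕ) : R) = (x:R)*(p:R) from Nat.cast_mul (α := ZMod (p^2)) x p, mul_comm])
  have hdf : derivative f = C ((p:ℕ) : R) * X^(p-1) + C e * 1 + derivative m := by
    rw [hf, hgdef, derivative_add, derivative_add, derivative_X_pow, derivative_C_mul,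
      derivative_X]
  have h1 : C cc * (C ((p:ℕ):R) * X^(p-1)) = 0 := by
    rw [← mul_assoc, ← C_mul]
    have hz : cc * ((p:ℕ):R) = 0 := by
      rw [hccdef]
      push_cast
      calc (p:R)*t*(p:R) = ((p:R)*(p:R))*t := by ring
      _ = 0 := by rw [hpp, zero_mul]
    rw [hz, C_0, zero_mul]
  have h2 : C cc * derivative m = 0 := hCzero cc (derivative m) hccd hPm'
  have hterm2 : C cc * derivative f = C (cc * e) := by
    rw [hdf, mul_add, mul_add, h1, h2, add_zero, zero_add, mul_one, ← C_mul]
  have hfa : f^a = g^a + a • (m * g^(a-1)) := by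
    rw [hf]; exact pow_add_sq_zero' g m hm2 a
  have hfa1 : f^(a-1) = g^(a-1) + (a-1) • (m * g^(a-2)) := by
    rw [hf]; exact pow_add_sq_zero' g m hm2 (a-1)
  have hterm2' : C (cc*e) * f^(a-1) = C (cc*e) * g^(a-1) := by
    rw [hfa1, mul_add]
    have hz : C (cc*e) * ((a-1) • (m * g^(a-2))) = 0 := by
      rw [mul_smul_comm, ← mul_assoc, hCzero (cc*e) m (hccd.mul_right e) hPm,
        zero_mul, smul_zero]
    rw [hz, add_zero]
  have hdecomp : (ascPochhammer ℕ (a*p)).map φ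
      = g^a + a • (m * g^(a-1)) + C (cc*e) * g^(a-1) := by
    rw [hmap, hprod, hsum, hterm2, hterm2', hfa]
  -- coefficient extraction
  have hcg : ∀ n N', (∀ j, j ≤ n → j*p + (n-j) ≠ N') → (g^n).coeff N' = 0 := by
    intro n N' h
    rw [hgdef]; exact coeff_g_pow_zero e p n N' h
  have hz1 : (g^a).coeff N = 0 := by
    apply hcg
    intro j hj heq
    rw [hN] at heq
    exact lemA hp5 hl1 hl2 hr1 hr2 hkL hkap hj heq
  have hz3 : (g^(a-1)).coeff N = 0 := by
    apply hcg
    intro j hj heq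
    rw [hN] at heq
    exact lemB hp5 hl1 hl2 hr1 hr2 hkL hkap (show j < a by omega) heq
  have hmg : (m * g^(a-1)).coeff N
      = φ ((ascPochhammer ℕ p).coeff (p-r)) * (((a-1).choose (a-l) : R) * e^(a-1-(a-l))) := by
    have hexp : m * g^(a-1) = ∑ i ∈ Finset.Ico 2 p, ∑ j ∈ Finset.range a,
        C (φ ((ascPochhammer ℕ p).coeff i) * (((a-1).choose j : R) * e^(a-1-j)))
          * X^(i + (j*p + (a-1-j))) := by
      rw [hmdef, hgdef, g_pow_expand, show a-1+1 = a from by omega, Finset.sum_mul_sum]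
      apply Finset.sum_congr rfl
      intro i _
      apply Finset.sum_congr rfl
      intro j _
      rw [mul_mul_mul_comm, ← C_mul, ← pow_add]
    rw [hexp, finset_sum_coeff, Finset.sum_eq_single (p-r)]
    · rw [finset_sum_coeff, Finset.sum_eq_single (a-l)]
      · rw [coeff_C_mul, coeff_X_pow, if_pos, mul_one]
        rw [hN]
        exact ((lemC hp5 hl1 hl2 hr1 hr2 hkL hkap (i := p-r) (j := a-l)
          (by omega) (by omega) (by omega)).mpr ⟨rfl, rfl⟩).symm
      · intro j hj hne
        rw [coeff_C_mul, coeff_X_pow, if_neg, mul_zero]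
        intro heq
        rw [hN] at heq
        have := (lemC hp5 hl1 hl2 hr1 hr2 hkL hkap (by omega) (by omega)
          (Finset.mem_range.mp hj)).mp heq.symm
        exact hne this.2
      · intro hnm
        exact absurd (Finset.mem_range.mpr (by omega)) hnm
    · intro i hi hne
      rw [finset_sum_coeff]
      apply Finset.sum_eq_zero
      intro j hj
      rw [coeff_C_mul, coeff_X_pow, if_neg, mul_zero]
      intro heq
      rw [hN] at heq
      have hi' := Finset.mem_Ico.mp hi
      have := (lemC hp5 hl1 hl2 hr1 hr2 hkL hkap hi'.1 hi'.2
        (Finset.mem_range.mp hj)).mp heq.symm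
      exact hne this.1
    · intro hnm
      exact absurd (Finset.mem_Ico.mpr ⟨by omega, by omega⟩) hnm
  have hsingle : a - 1 - (a-l) = l - 1 := by omega
  have hchoose : (a-1).choose (a-l) = (a-1).choose (l-1) := by
    rw [show a - l = (a-1) - (l-1) from by omega]
    exact Nat.choose_symm (by omega)
  have hlhs : ((ascPochhammer ℕ (a*p)).coeff N : R)
      = ((ascPochhammer ℕ (a*p)).map φ).coeff N := by
    rw [coeff_map]; rfl
  rw [hlhs, hdecomp, coeff_add, coeff_add, coeff_smul, coeff_C_mul, hz1, hz3, hmg,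
    hsingle, hchoose, mul_zero, add_zero, zero_add, hedef]
  simp only [hφapp]
  push_cast
  rw [nsmul_eq_mul]
  ring
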